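/- arXiv:1312.6053 — 4 statements merged into one kernel-verified Lean document; each statement's English description precedes it below -/
import Mathlib

section
/- Let M be an infinitesimally Kobayashi non-degenerate complex manifold and f : M → ℂ̂ meromorphic. If for every holomorphic map φ : 𝔻 → M the spherical derivative of f∘φ at 0 is bounded by a constant C independent of φ (i.e., |(f∘φ)'(0)|/(1+|f∘φ(0)|²) ≤ C), then f is normal: χ(f(z), f_*(z)(ξ)) ≤ 2C·k_M(z,ξ) for all z ∈ M, ξ ∈ T_z(M). -/
open Metric Set Filter

noncomputable section

/-- The unit disk in ℂ. -/
def unitDisk : Set ℂ := Metric.ball 0 1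

variable {E : Type*} [NormedAddCommGroup E] [NormedSpace ℂ E]

/-- An analytic disk in `M`: a holomorphic map from the unit disk into `M`. -/
def AnalyticDiskIn (M : Set E) (φ : ℂ → E) : Prop :=
  DifferentiableOn ℂ φ unitDisk ∧ Set.MapsTo φ unitDisk M

/-- The infinitesimal Kobayashi–Royden pseudometric. -/
def kobayashi (M : Set E) (z ξ : E) : ℝ :=
  sInf { r : ℝ | ∃ (φ : ℂ → E) (a : ℂ), AnalyticDiskIn M φ ∧ φ 0 = z ∧
    deriv φ 0 = a • ξ ∧ a ≠ 0 ∧ r = 1 / ‖a‖ }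

/-- The infinitesimal spherical metric `χ(w, ξ) = 2|ξ|/(1+|w|²)`. -/
def sphMetric (w ξ : ℂ) : ℝ := 2 * ‖ξ‖ / (1 + ‖w‖ ^ 2)

/-- `g` is a normal function on `M`. -/
def NormalOn (M : Set E) (g : E → ℂ) : Prop :=
  ∃ C : ℝ, ∀ z ∈ M, ∀ ξ : E, sphMetric (g z) (fderiv ℂ g z ξ) ≤ C * kobayashi M z ξ

/-- `f` is a Bloch function on `M`. -/
def BlochOn (M : Set E) (f : E → ℂ) : Prop :=
  ∃ C : ℝ, ∀ z ∈ M, ∀ ξ : E, ‖fderiv ℂ f z ξ‖ ≤ C * kobayashi M z ξ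

/-- `f` is semi-Bloch on `M`: `exp (λ f)` is normal for every `λ ∈ ℂ`. -/
def SemiBloch (M : Set E) (f : E → ℂ) : Prop :=
  ∀ lam : ℂ, NormalOn M (fun z => Complex.exp (lam * f z))

/-- `M` is infinitesimally Kobayashi non-degenerate. -/
def KobayashiNondegenerate (M : Set E) : Prop :=
  ∀ z ∈ M, ∀ ξ : E, ξ ≠ 0 → 0 < kobayashi M z ξ

/-- `D(w₀, r)` is a schlicht disk in the range of `f`. -/
def SchlichtRadius (M : Set E) (f : E → ℂ) (w₀ : ℂ) (r : ℝ) : Prop :=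
  ∃ h : ℂ → E, DifferentiableOn ℂ h unitDisk ∧ Set.MapsTo h unitDisk M ∧
    DifferentiableOn ℂ (f ∘ h) unitDisk ∧ Set.BijOn (f ∘ h) unitDisk (Metric.ball w₀ r)

/-- A (real-affine) line in the complex plane. -/
def IsLine (L : Set ℂ) : Prop :=
  ∃ a b : ℂ, b ≠ 0 ∧ L = {z : ℂ | ∃ t : ℝ, z = a + t * b}

/-- The chordal (spherical) distance on ℂ ⊂ ℂ̂. -/
def chordal (w z : ℂ) : ℝ :=
  2 * dist w z / (Real.sqrt (1 + ‖w‖ ^ 2) * Real.sqrt (1 + ‖z‖ ^ 2))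

/-- A sequence of functions on the unit disk is a normal family with respect to the
spherical metric: every subsequence has a further subsequence converging locally
uniformly on the disk, either spherically to a function or uniformly to `∞` on compacta. -/
def SphNormalFamily (g : ℕ → ℂ → ℂ) : Prop :=
  ∀ s : ℕ → ℕ, ∃ t : ℕ → ℕ, StrictMono t ∧
    ((∃ h : ℂ → ℂ, ∀ K ⊆ unitDisk, IsCompact K → ∀ ε > 0,
        ∀ᶠ j in Filter.atTop, ∀ x ∈ K, chordal (g (s (t j)) x) (h x) < ε) ∨
      (∀ K ⊆ unitDisk, IsCompact K → ∀ C : ℝ,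
        ∀ᶠ j in Filter.atTop, ∀ x ∈ K, C ≤ ‖g (s (t j)) x‖))


/-- If the spherical derivative of `f ∘ φ` at `0` is bounded by `C` uniformly over all
analytic disks `φ` in a Kobayashi non-degenerate `M`, then `f` is normal with
constant `2C`. -/
theorem sph_deriv_bound_implies_normal (M : Set E) (hM : IsOpen M)
    (hk : KobayashiNondegenerate M) (f : E → ℂ) (hf : DifferentiableOn ℂ f M)
    (C : ℝ)
    (hC : ∀ φ : ℂ → E, AnalyticDiskIn M φ →
      ‖deriv (f ∘ φ) 0‖ / (1 + ‖f (φ 0)‖ ^ 2) ≤ C) :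
    ∀ z ∈ M, ∀ ξ : E,
      sphMetric (f z) (fderiv ℂ f z ξ) ≤ 2 * C * kobayashi M z ξ := by
  intro z hz ξ
  have hzM : DifferentiableAt ℂ f z := hf.differentiableAt (hM.mem_nhds hz)
  set v := fderiv ℂ f z ξ with hv
  have hd0 : (0:ℝ) < 1 + ‖f z‖ ^ 2 := by positivity
  set S := { r : ℝ | ∃ (φ : ℂ → E) (a : ℂ), AnalyticDiskIn M φ ∧ φ 0 = z ∧
    deriv φ 0 = a • ξ ∧ a ≠ 0 ∧ r = 1 / ‖a‖ } with hSdef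
  have hkob : kobayashi M z ξ = sInf S := rfl
  -- C is nonnegative
  have hC0 : 0 ≤ C := by
    have h := hC (fun _ => z) ⟨differentiableOn_const _, fun x _ => hz⟩
    have hconst : deriv (f ∘ fun _ : ℂ => z) 0 = 0 := by
      simp [Function.comp_def]
    rw [hconst] at h
    simpa using h
  -- elements of S are nonnegative
  have hSnn : ∀ r ∈ S, (0:ℝ) ≤ r := by
    rintro r ⟨φ, a, hφ, hφ0, hφd, ha, rfl⟩
    positivity
  have hknn : 0 ≤ kobayashi M z ξ := by
    rw [hkob]; exact Real.sInf_nonneg hSnn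
  -- key estimate
  have key : ∀ r ∈ S, 2 * ‖v‖ / (1 + ‖f z‖ ^ 2) ≤ 2 * C * r := by
    rintro r ⟨φ, a, hφ, hφ0, hφd, ha, rfl⟩
    have h0disk : (0:ℂ) ∈ unitDisk := by simp [unitDisk]
    have hφat : DifferentiableAt ℂ φ 0 :=
      hφ.1.differentiableAt (Metric.isOpen_ball.mem_nhds h0disk)
    have hfat : DifferentiableAt ℂ f (φ 0) := by rw [hφ0]; exact hzM
    have hder : deriv (f ∘ φ) 0 = a • v := by
      rw [fderiv_comp_deriv 0 hfat hφat, hφd, hφ0, map_smul]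
    have hb := hC φ hφ
    rw [hder, hφ0, norm_smul] at hb
    have ha0 : (0:ℝ) < ‖a‖ := norm_pos_iff.mpr ha
    have hav : ‖a‖ * ‖v‖ ≤ C * (1 + ‖f z‖ ^ 2) := by
      rw [div_le_iff₀ hd0] at hb
      linarith
    rw [div_le_iff₀ hd0, mul_comm (2*C) (1/‖a‖)]
    rw [show (1/‖a‖) * (2*C) * (1 + ‖f z‖^2) = (2 * (C * (1 + ‖f z‖^2)))/‖a‖ by ring,
      le_div_iff₀ ha0]
    nlinarith
  have hgoal : sphMetric (f z) v = 2 * ‖v‖ / (1 + ‖f z‖ ^ 2) := rfl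
  rw [hgoal]
  by_cases hξ : ξ = 0
  · have hv0 : v = 0 := by rw [hv, hξ, map_zero]
    rw [hv0]
    simpa using mul_nonneg (mul_nonneg (by norm_num) hC0) hknn
  · have hkpos : 0 < kobayashi M z ξ := hk z hz ξ hξ
    have hS : S.Nonempty := by
      by_contra h
      rw [Set.not_nonempty_iff_eq_empty] at h
      rw [hkob, h, Real.sInf_empty] at hkpos
      exact lt_irrefl 0 hkpos
    rcases eq_or_lt_of_le hC0 with hCeq | hCpos
    · obtain ⟨r, hr⟩ := hS
      have h1 := key r hr
      rw [← hCeq] at h1 ⊢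
      simpa using le_trans h1 (by simp)
    · have h2C : (0:ℝ) < 2 * C := by linarith
      have hle : (2 * ‖v‖ / (1 + ‖f z‖ ^ 2)) / (2 * C) ≤ sInf S := by
        apply le_csInf hS
        intro b hb
        rw [div_le_iff₀ h2C]
        have := key b hb
        linarith
      rw [hkob]
      rw [div_le_iff₀ h2C] at hle
      linarith


end
end

section
/- Let M be infinitesimally Kobayashi non-degenerate and f : M → ℂ semi-Bloch. Then for each (real-affine) line L in ℂ, M_L := sup{ |f_*(z)(ξ)| / k_M(z,ξ) : z ∈ M, f(z) ∈ L, ξ ∈ T_z(M)∖{0} } < ∞. -/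
open Metric Set Filter

noncomputable section

variable {E : Type*} [NormedAddCommGroup E] [NormedSpace ℂ E]

/-- If `f` is semi-Bloch on a Kobayashi non-degenerate `M`, then for each line `L`,
`M_L = sup { |f_*(z) ξ| / k_M(z,ξ) : f z ∈ L } < ∞`. -/
theorem semiBloch_line_bound (M : Set E) (hM : IsOpen M)
    (hk : KobayashiNondegenerate M) (f : E → ℂ) (hf : DifferentiableOn ℂ f M)
    (hsb : SemiBloch M f) :
    ∀ L : Set ℂ, IsLine L → ∃ C : ℝ, ∀ z ∈ M, f z ∈ L → ∀ ξ : E,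
      ‖fderiv ℂ f z ξ‖ ≤ C * kobayashi M z ξ := by
  rintro L ⟨a, b, hb, rfl⟩
  set lam : ℂ := Complex.I / b with hlam
  have hlam0 : lam ≠ 0 := div_ne_zero Complex.I_ne_zero hb
  obtain ⟨C, hC⟩ := hsb lam
  set c : ℝ := Real.exp ((Complex.I * a / b).re) with hc
  have hcpos : 0 < c := Real.exp_pos _
  refine ⟨C * (1 + c ^ 2) / (2 * c * ‖lam‖), ?_⟩
  rintro z hz ⟨t, ht⟩ ξ
  have hfz : HasFDerivAt f (fderiv ℂ f z) z :=
    (hf.differentiableAt (hM.mem_nhds hz)).hasFDerivAt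
  have h1 : HasFDerivAt (fun z => lam * f z) (lam • fderiv ℂ f z) z := by
    exact hfz.const_mul lam
  have h2 : HasFDerivAt (fun z => Complex.exp (lam * f z))
      (Complex.exp (lam * f z) • (lam • fderiv ℂ f z)) z :=
    (Complex.hasDerivAt_exp (lam * f z)).comp_hasFDerivAt z h1
  have hnorm : ‖Complex.exp (lam * f z)‖ = c := by
    have hw : lam * f z = Complex.I * a / b + (t : ℂ) * Complex.I := by
      rw [ht, hlam]; field_simp
    rw [Complex.norm_exp, hw]
    simp [Complex.add_re, Complex.mul_re, hc]
  have key := hC z hz ξ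
  rw [h2.fderiv] at key
  simp only [ContinuousLinearMap.smul_apply] at key
  have hval : sphMetric (Complex.exp (lam * f z))
      (Complex.exp (lam * f z) • lam • fderiv ℂ f z ξ)
      = 2 * (c * (‖lam‖ * ‖fderiv ℂ f z ξ‖)) / (1 + c ^ 2) := by
    simp [sphMetric, norm_smul, hnorm, mul_assoc]
  rw [hval] at key
  have hden : (0:ℝ) < 1 + c ^ 2 := by positivity
  have hlamn : (0:ℝ) < ‖lam‖ := norm_pos_iff.mpr hlam0
  rw [div_le_iff₀ hden] at key
  rw [div_mul_eq_mul_div, le_div_iff₀ (by positivity)]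
  nlinarith [norm_nonneg (fderiv ℂ f z ξ)]

end
end

section
/- Let M be infinitesimally Kobayashi non-degenerate and f : M → ℂ holomorphic. If for each line L ⊂ ℂ the quantity M_L = sup{ |f_*(z)(ξ)|/k_M(z,ξ) : f(z) ∈ L, ξ ≠ 0 } is finite, then f is semi-Bloch, i.e., exp(λ f) is normal for every λ ∈ ℂ. -/
open Metric Set Filter Topology

noncomputable section

variable {E : Type*} [NormedAddCommGroup E] [NormedSpace ℂ E]

/-- Schwarz-type bound on a half-plane-valued map via `exp`. -/
lemma halfplane_bound {F : ℂ → ℂ} {d τ : ℝ} (hd : 0 < d)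
    (hdiff : DifferentiableOn ℂ F (ball 0 d))
    (hpos : ∀ x ∈ ball (0:ℂ) d, τ < (F x).re) :
    ‖deriv F 0‖ ≤ (2 / d) * Real.exp ((F 0).re - τ) := by
  have h0 : (0:ℂ) ∈ ball (0:ℂ) d := by simpa using hd
  set G : ℂ → ℂ := fun t => Complex.exp (↑τ - F t) with hG
  have hGdiff : DifferentiableOn ℂ G (ball 0 d) :=
    (DifferentiableOn.const_sub hdiff _).cexp
  have hGnorm : ∀ x ∈ ball (0:ℂ) d, ‖G x‖ < 1 := by
    intro x hx
    rw [hG]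
    simp only [Complex.norm_exp]
    rw [show ((↑τ - F x).re) = τ - (F x).re by simp]
    have := hpos x hx
    calc Real.exp (τ - (F x).re) < Real.exp 0 := by
          apply Real.exp_lt_exp.2; linarith
      _ = 1 := Real.exp_zero
  have hmaps : MapsTo G (ball 0 d) (ball (G 0) 2) := by
    intro x hx
    have h1 := hGnorm x hx
    have h2 := hGnorm 0 h0
    rw [mem_ball, dist_eq_norm]
    calc ‖G x - G 0‖ ≤ ‖G x‖ + ‖G 0‖ := norm_sub_le _ _
      _ < 2 := by linarith
  have hSch := Complex.norm_deriv_le_div_of_mapsTo_ball hGdiff (hmaps.mono_right ball_subset_closedBall) hd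
  -- compute deriv G 0
  have hF0 : HasDerivAt F (deriv F 0) 0 :=
    ((hdiff.differentiableAt (isOpen_ball.mem_nhds h0))).hasDerivAt
  have hG0 : HasDerivAt G (Complex.exp (↑τ - F 0) * (-deriv F 0)) 0 := by
    have := (hF0.const_sub (τ:ℂ)).cexp
    simpa using this
  have hderivG : deriv G 0 = Complex.exp (↑τ - F 0) * (-deriv F 0) := hG0.deriv
  rw [hderivG] at hSch
  have hnorm : ‖Complex.exp (↑τ - F 0) * -deriv F 0‖
      = Real.exp (τ - (F 0).re) * ‖deriv F 0‖ := by
    rw [norm_mul, norm_neg, Complex.norm_exp, Complex.sub_re,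
      Complex.ofReal_re]
  rw [hnorm] at hSch
  have hepos : (0:ℝ) < Real.exp (τ - (F 0).re) := Real.exp_pos _
  have := mul_le_mul_of_nonneg_right hSch (le_of_lt (Real.exp_pos ((F 0).re - τ)))
  calc ‖deriv F 0‖ = Real.exp (τ - (F 0).re) * ‖deriv F 0‖ * Real.exp ((F 0).re - τ) := by
        rw [mul_comm (Real.exp (τ - (F 0).re)) _, mul_assoc, ← Real.exp_add]
        simp
    _ ≤ 2 / d * Real.exp ((F 0).re - τ) := this

lemma caseB {F : ℂ → ℂ} {N c₀ δ : ℝ} (hδ : 0 < δ) (hN : 0 ≤ N)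
    (hdiff : DifferentiableOn ℂ F (ball 0 1))
    (hstrip : ∀ ζ ∈ ball (0:ℂ) (8⁻¹:ℝ), (F ζ).re ∈ Set.Ioo (c₀ - δ) (c₀ + δ) → ‖deriv F ζ‖ ≤ N)
    (hu : c₀ + 3*δ/4 < (F 0).re) :
    ‖deriv F 0‖ ≤ (16 + 16*(N+1)/δ) * Real.exp ((F 0).re - (c₀ + δ/2)) := by
  have hN1 : (0:ℝ) < N + 1 := by linarith
  set d₀ : ℝ := min (8⁻¹:ℝ) (δ/(8*(N+1))) with hd₀def
  have hd₀pos : 0 < d₀ := lt_min (by norm_num) (by positivity)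
  have hd₀le : d₀ ≤ 8⁻¹ := min_le_left _ _
  have hd₀le' : d₀ ≤ δ/(8*(N+1)) := min_le_right _ _
  have hsub : ball (0:ℂ) d₀ ⊆ ball 0 1 :=
    ball_subset_ball (le_trans hd₀le (by norm_num))
  set τ : ℝ := c₀ + δ/2 with hτdef
  have hpos : ∀ x ∈ ball (0:ℂ) d₀, τ < (F x).re := by
    by_contra hcon
    push_neg at hcon
    obtain ⟨x, hx, hxle⟩ := hcon
    have hxnorm : ‖x‖ < d₀ := by rwa [mem_ball, dist_zero_right] at hx
    set ψ : ℝ → ℝ := fun s => (F (↑s * x)).re with hψdef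
    have hmem : ∀ t ∈ Icc (0:ℝ) 1, (↑t*x : ℂ) ∈ ball (0:ℂ) d₀ := by
      intro t ht
      rw [mem_ball, dist_zero_right, norm_mul, Complex.norm_real, Real.norm_eq_abs,
        abs_of_nonneg ht.1]
      calc t * ‖x‖ ≤ 1 * ‖x‖ := mul_le_mul_of_nonneg_right ht.2 (norm_nonneg _)
        _ < d₀ := by rwa [one_mul]
    have hψd : ∀ t ∈ Icc (0:ℝ) 1, HasDerivAt ψ ((deriv F (↑t*x) * x).re) t := by
      intro t ht
      have hFat : HasDerivAt F (deriv F (↑t*x)) (↑t*x) :=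
        ((hdiff.differentiableAt (isOpen_ball.mem_nhds (hsub (hmem t ht))))).hasDerivAt
      have hin : HasDerivAt (fun w : ℂ => w * x) x (↑t:ℂ) := by
        simpa using (hasDerivAt_id (↑t:ℂ)).mul_const x
      have hcomp : HasDerivAt (fun w : ℂ => F (w * x)) (deriv F (↑t*x) * x) (↑t:ℂ) :=
        HasDerivAt.comp _ hFat hin
      exact hcomp.real_of_complex
    have hψcont : ContinuousOn ψ (Icc 0 1) :=
      fun t ht => ((hψd t ht).continuousAt).continuousWithinAt
    have hψ0 : c₀ + 3*δ/4 < ψ 0 := by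
      simpa [hψdef] using hu
    have hψ1 : ψ 1 ≤ τ := by
      simpa [hψdef] using hxle
    set Sset : Set ℝ := Icc (0:ℝ) 1 ∩ ψ ⁻¹' (Iic τ) with hSsetdef
    have hSclosed : IsClosed Sset :=
      hψcont.preimage_isClosed_of_isClosed isClosed_Icc isClosed_Iic
    have hSne : Sset.Nonempty := ⟨1, ⟨right_mem_Icc.2 zero_le_one, hψ1⟩⟩
    have hSbdd : BddBelow Sset := ⟨0, fun t ht => ht.1.1⟩
    set β := sInf Sset with hβdef
    have hβS : β ∈ Sset := hSclosed.csInf_mem hSne hSbdd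
    have hβIcc : β ∈ Icc (0:ℝ) 1 := hβS.1
    have hψβle : ψ β ≤ τ := hβS.2
    have hβpos : 0 < β := by
      rcases eq_or_lt_of_le hβIcc.1 with h|h
      · exfalso; rw [← h] at hψβle; rw [hτdef] at hψβle; linarith
      · exact h
    have hlb : ∀ t, t ∈ Icc (0:ℝ) 1 → t < β → τ < ψ t := by
      intro t ht htβ
      by_contra hle
      push_neg at hle
      exact absurd (csInf_le hSbdd ⟨ht, hle⟩) (not_le.2 htβ)
    have hψβ : ψ β = τ := by
      refine le_antisymm hψβle ?_
      by_contra hlt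
      push_neg at hlt
      have hβc : ContinuousWithinAt ψ (Icc 0 1) β := hψcont β hβIcc
      have hev : ∀ᶠ t in 𝓝[Icc (0:ℝ) 1] β, ψ t < τ := hβc (Iio_mem_nhds hlt)
      have hne : (𝓝[Ico (0:ℝ) β] β).NeBot := by
        rw [← mem_closure_iff_nhdsWithin_neBot, closure_Ico hβpos.ne]
        exact right_mem_Icc.2 hβIcc.1
      have hsub2 : Ico (0:ℝ) β ⊆ Icc 0 1 :=
        fun t ht => ⟨ht.1, le_trans (le_of_lt ht.2) hβIcc.2⟩
      have hev2 : ∀ᶠ t in 𝓝[Ico (0:ℝ) β] β, ψ t < τ :=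
        hev.filter_mono (nhdsWithin_mono β hsub2)
      obtain ⟨t, htψ, htI⟩ := (hev2.and eventually_mem_nhdsWithin).exists
      exact absurd (hlb t (hsub2 htI) htI.2) (not_lt.2 (le_of_lt htψ))
    set A : Set ℝ := Icc (0:ℝ) β ∩ ψ ⁻¹' (Ici (c₀ + 3*δ/4)) with hAdef
    have hAclosed : IsClosed A :=
      (hψcont.mono (Icc_subset_Icc_right hβIcc.2)).preimage_isClosed_of_isClosed
        isClosed_Icc isClosed_Ici
    have hA0 : (0:ℝ) ∈ A := ⟨left_mem_Icc.2 (le_of_lt hβpos), le_of_lt hψ0⟩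
    have hAbdd : BddAbove A := ⟨β, fun t ht => ht.1.2⟩
    set α := sSup A with hαdef
    have hαA : α ∈ A := hAclosed.csSup_mem ⟨0, hA0⟩ hAbdd
    have hα0 : 0 ≤ α := hαA.1.1
    have hψα : c₀ + 3*δ/4 ≤ ψ α := hαA.2
    have hαβ : α < β := by
      rcases eq_or_lt_of_le hαA.1.2 with h|h
      · exfalso; rw [h, hψβ, hτdef] at hψα; linarith
      · exact h
    have hub2 : ∀ t, α < t → t ≤ β → ψ t < c₀ + 3*δ/4 := by
      intro t hαt htβ
      by_contra hge
      push_neg at hge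
      exact absurd (le_csSup hAbdd ⟨⟨le_trans hα0 (le_of_lt hαt), htβ⟩, hge⟩)
        (not_le.2 hαt)
    have hlow : ∀ t, α < t → t ≤ β → τ ≤ ψ t := by
      intro t hαt htβ
      rcases eq_or_lt_of_le htβ with rfl|h
      · exact le_of_eq hψβ.symm
      · exact le_of_lt (hlb t ⟨le_trans hα0 (le_of_lt hαt), le_trans htβ hβIcc.2⟩ h)
    have hαIcc : α ∈ Icc (0:ℝ) 1 := ⟨hα0, le_trans hαA.1.2 hβIcc.2⟩
    have hαcont : ContinuousWithinAt ψ (Icc 0 1) α := hψcont α hαIcc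
    have hδ16 : (0:ℝ) < δ/16 := by linarith
    have hev : ∀ᶠ t in 𝓝[Icc (0:ℝ) 1] α, ψ t ∈ ball (ψ α) (δ/16) :=
      hαcont (ball_mem_nhds _ hδ16)
    have hne : (𝓝[Ioo α β] α).NeBot := by
      rw [← mem_closure_iff_nhdsWithin_neBot, closure_Ioo (ne_of_lt hαβ)]
      exact ⟨le_refl _, le_of_lt hαβ⟩
    have hsub3 : Ioo α β ⊆ Icc 0 1 :=
      fun t ht => ⟨le_trans hα0 (le_of_lt ht.1), le_trans (le_of_lt ht.2) hβIcc.2⟩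
    have hev2 : ∀ᶠ t in 𝓝[Ioo α β] α, ψ t ∈ ball (ψ α) (δ/16) :=
      hev.filter_mono (nhdsWithin_mono α hsub3)
    obtain ⟨α', hα'ball, hα'I⟩ := (hev2.and eventually_mem_nhdsWithin).exists
    have hα'dist : |ψ α' - ψ α| < δ/16 := by
      rw [mem_ball, Real.dist_eq] at hα'ball; exact hα'ball
    have hα'0 : 0 ≤ α' := le_trans hα0 (le_of_lt hα'I.1)
    have hsubIcc : Icc α' β ⊆ Icc (0:ℝ) 1 :=
      fun t ht => ⟨le_trans hα'0 ht.1, le_trans ht.2 hβIcc.2⟩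
    have hbound : ∀ t ∈ Ico α' β, ‖(deriv F (↑t*x) * x).re‖ ≤ N * ‖x‖ := by
      intro t ht
      have htIcc : t ∈ Icc α' β := ⟨ht.1, le_of_lt ht.2⟩
      have ht01 : t ∈ Icc (0:ℝ) 1 := hsubIcc htIcc
      have htαβ : α < t := lt_of_lt_of_le hα'I.1 ht.1
      have hψt_hi : ψ t < c₀ + 3*δ/4 := hub2 t htαβ (le_of_lt ht.2)
      have hψt_lo : τ ≤ ψ t := hlow t htαβ (le_of_lt ht.2)
      have hball : (↑t*x : ℂ) ∈ ball (0:ℂ) (8⁻¹:ℝ) := by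
        have h5 := hmem t ht01
        rw [mem_ball, dist_zero_right] at h5 ⊢
        exact lt_of_lt_of_le h5 hd₀le
      have hIoo : (F (↑t*x)).re ∈ Set.Ioo (c₀ - δ) (c₀ + δ) := by
        constructor
        · have h6 : c₀ - δ < τ := by rw [hτdef]; linarith
          exact lt_of_lt_of_le h6 hψt_lo
        · calc (F (↑t*x)).re = ψ t := rfl
            _ < c₀ + 3*δ/4 := hψt_hi
            _ < c₀ + δ := by linarith
      have hF' := hstrip _ hball hIoo
      calc ‖(deriv F (↑t*x) * x).re‖ = |(deriv F (↑t*x) * x).re| := Real.norm_eq_abs _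
        _ ≤ ‖deriv F (↑t*x) * x‖ := Complex.abs_re_le_norm _
        _ = ‖deriv F (↑t*x)‖ * ‖x‖ := by
            rw [norm_mul]
        _ ≤ N * ‖x‖ := mul_le_mul_of_nonneg_right hF' (norm_nonneg _)
    have hMVT := norm_image_sub_le_of_norm_deriv_le_segment'
      (fun t ht => ((hψd t (hsubIcc ht)).hasDerivWithinAt))
      hbound β (right_mem_Icc.2 (le_of_lt hα'I.2))
    have h1 : |ψ β - ψ α'| ≤ N * ‖x‖ * (β - α') := hMVT
    have h2 : N * ‖x‖ * (β - α') ≤ N * ‖x‖ := by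
      have h3 : β - α' ≤ 1 := by
        have := hβIcc.2; linarith
      have h7 : 0 ≤ N * ‖x‖ := mul_nonneg hN (norm_nonneg _)
      nlinarith
    have h4 : N * ‖x‖ ≤ δ/8 := by
      have h8 : ‖x‖ ≤ δ/(8*(N+1)) := le_trans (le_of_lt hxnorm) hd₀le'
      calc N*‖x‖ ≤ N * (δ/(8*(N+1))) := mul_le_mul_of_nonneg_left h8 hN
        _ ≤ δ/8 := by
            have heq : N * (δ/(8*(N+1))) = (N*δ)/(8*(N+1)) := by ring
            rw [heq, div_le_div_iff₀ (by positivity) (by norm_num : (0:ℝ) < 8)]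
            nlinarith
    have h6 : ψ α' - ψ β ≥ 3*δ/16 := by
      have habs := abs_lt.1 hα'dist
      rw [hψβ, hτdef]
      have := hψα
      linarith [habs.1, habs.2]
    have h9 : 3*δ/16 ≤ |ψ β - ψ α'| := by
      rw [abs_sub_comm]
      calc (3:ℝ)*δ/16 ≤ ψ α' - ψ β := h6
        _ ≤ |ψ α' - ψ β| := le_abs_self _
    linarith
  have hhb := halfplane_bound hd₀pos (hdiff.mono hsub) hpos
  have hK : 2/d₀ ≤ 16 + 16*(N+1)/δ := by
    rcases min_cases (8⁻¹:ℝ) (δ/(8*(N+1))) with ⟨h,_⟩|⟨h,_⟩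
    · rw [hd₀def, h]
      have : (0:ℝ) ≤ 16*(N+1)/δ := by positivity
      norm_num
      linarith
    · rw [hd₀def, h, div_div_eq_mul_div]
      have : (2:ℝ) * (8*(N+1)) / δ = 16*(N+1)/δ := by ring_nf
      rw [this]
      linarith [show (0:ℝ) ≤ 16 by norm_num]
  calc ‖deriv F 0‖ ≤ (2 / d₀) * Real.exp ((F 0).re - τ) := hhb
    _ ≤ (16 + 16*(N+1)/δ) * Real.exp ((F 0).re - (c₀ + δ/2)) := by
        rw [hτdef]
        exact mul_le_mul_of_nonneg_right hK (le_of_lt (Real.exp_pos _))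

lemma exp_le_two_mul_cosh (x : ℝ) : Real.exp x ≤ 2 * Real.cosh x := by
  rw [Real.cosh_eq]; have := Real.exp_pos (-x); linarith

lemma exp_neg_le_two_mul_cosh (x : ℝ) : Real.exp (-x) ≤ 2 * Real.cosh x := by
  rw [Real.cosh_eq]; have := Real.exp_pos x; linarith

lemma strip_to_global {F : ℂ → ℂ} {N c₀ δ : ℝ} (hδ : 0 < δ) (hN : 0 ≤ N)
    (hdiff : DifferentiableOn ℂ F (ball 0 1))
    (hstrip : ∀ ζ ∈ ball (0:ℂ) (8⁻¹:ℝ), (F ζ).re ∈ Set.Ioo (c₀ - δ) (c₀ + δ) → ‖deriv F ζ‖ ≤ N) :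
    ‖deriv F 0‖ ≤ (N + (16 + 16*(N+1)/δ) * (2 * Real.exp (|c₀| + δ))) * Real.cosh ((F 0).re) := by
  set u₀ := (F 0).re with hu₀def
  have hcosh1 : 1 ≤ Real.cosh u₀ := Real.one_le_cosh u₀
  have hcoshpos : (0:ℝ) < Real.cosh u₀ := lt_of_lt_of_le one_pos hcosh1
  have hKnn : (0:ℝ) ≤ 16 + 16*(N+1)/δ := by positivity
  have hC2 : (0:ℝ) ≤ (16 + 16*(N+1)/δ) * (2*Real.exp (|c₀|+δ)) := by positivity
  have hexple : ∀ y : ℝ, y ≤ |c₀| + δ → Real.exp y ≤ Real.exp (|c₀| + δ) :=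
    fun y hy => Real.exp_le_exp.2 hy
  rcases le_or_gt u₀ (c₀ + 3*δ/4) with hB|hB
  · rcases le_or_gt (c₀ - 3*δ/4) u₀ with hmid|hC
    · -- middle case
      have h0mem : (0:ℂ) ∈ ball (0:ℂ) (8⁻¹:ℝ) := by
        rw [mem_ball, dist_self]; norm_num
      have hIoo : (F 0).re ∈ Set.Ioo (c₀-δ) (c₀+δ) := ⟨by rw [← hu₀def]; linarith,
        by rw [← hu₀def]; linarith⟩
      have hb := hstrip 0 h0mem hIoo
      calc ‖deriv F 0‖ ≤ N := hb
        _ = N * 1 := by ring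
        _ ≤ N * Real.cosh u₀ := mul_le_mul_of_nonneg_left hcosh1 hN
        _ ≤ _ := by nlinarith
    · -- lower case, reflect
      set G : ℂ → ℂ := fun t => (2*c₀ : ℂ) - F t with hGdef
      have hGdiff : DifferentiableOn ℂ G (ball 0 1) := DifferentiableOn.const_sub hdiff _
      have hGre : ∀ t, (G t).re = 2*c₀ - (F t).re := by
        intro t
        simp [hGdef]
      have hGderiv : ∀ ζ ∈ ball (0:ℂ) 1, deriv G ζ = - deriv F ζ := by
        intro ζ hζ
        have hFat : HasDerivAt F (deriv F ζ) ζ :=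
          (hdiff.differentiableAt (isOpen_ball.mem_nhds hζ)).hasDerivAt
        exact (hFat.const_sub _).deriv
      have hGstrip : ∀ ζ ∈ ball (0:ℂ) (8⁻¹:ℝ), (G ζ).re ∈ Set.Ioo (c₀-δ) (c₀+δ) →
          ‖deriv G ζ‖ ≤ N := by
        intro ζ hζ hre
        have hζ1 : ζ ∈ ball (0:ℂ) 1 := ball_subset_ball (by norm_num) hζ
        rw [hGderiv ζ hζ1, norm_neg]
        apply hstrip ζ hζ
        rw [hGre] at hre
        exact ⟨by linarith [hre.2], by linarith [hre.1]⟩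
      have hGu : c₀ + 3*δ/4 < (G 0).re := by rw [hGre]; linarith
      have hcb := caseB hδ hN hGdiff hGstrip hGu
      have h0b : (0:ℂ) ∈ ball (0:ℂ) 1 := by rw [mem_ball, dist_self]; norm_num
      rw [hGderiv 0 h0b, norm_neg, hGre 0, ← hu₀def] at hcb
      have hstep : (16+16*(N+1)/δ) * Real.exp (2*c₀ - u₀ - (c₀ + δ/2))
          ≤ (16+16*(N+1)/δ) * (2*Real.exp (|c₀|+δ) * Real.cosh u₀) := by
        apply mul_le_mul_of_nonneg_left _ hKnn
        have heq : 2*c₀ - u₀ - (c₀+δ/2) = (c₀ - δ/2) + (-u₀) := by ring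
        rw [heq, Real.exp_add]
        have h1 : Real.exp (c₀ - δ/2) ≤ Real.exp (|c₀| + δ) :=
          hexple _ (by cases abs_cases c₀ with
            | inl h => rw [h.1]; linarith
            | inr h => rw [h.1]; linarith)
        have h2 : Real.exp (-u₀) ≤ 2 * Real.cosh u₀ := exp_neg_le_two_mul_cosh u₀
        calc Real.exp (c₀-δ/2) * Real.exp (-u₀)
            ≤ Real.exp (|c₀|+δ) * (2*Real.cosh u₀) :=
              mul_le_mul h1 h2 (le_of_lt (Real.exp_pos _)) (le_of_lt (Real.exp_pos _))
          _ = 2*Real.exp (|c₀|+δ) * Real.cosh u₀ := by ring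
      calc ‖deriv F 0‖ ≤ (16+16*(N+1)/δ) * Real.exp (2*c₀ - u₀ - (c₀ + δ/2)) := hcb
        _ ≤ (16+16*(N+1)/δ) * (2*Real.exp (|c₀|+δ) * Real.cosh u₀) := hstep
        _ = ((16+16*(N+1)/δ) * (2*Real.exp (|c₀|+δ))) * Real.cosh u₀ := by ring
        _ ≤ _ := by nlinarith
  · -- upper case
    have hcb := caseB hδ hN hdiff hstrip hB
    rw [← hu₀def] at hcb
    have hstep : (16+16*(N+1)/δ) * Real.exp (u₀ - (c₀ + δ/2))
        ≤ (16+16*(N+1)/δ) * (2*Real.exp (|c₀|+δ) * Real.cosh u₀) := by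
      apply mul_le_mul_of_nonneg_left _ hKnn
      have heq : u₀ - (c₀+δ/2) = (-(c₀ + δ/2)) + u₀ := by ring
      rw [heq, Real.exp_add]
      have h1 : Real.exp (-(c₀ + δ/2)) ≤ Real.exp (|c₀| + δ) :=
        hexple _ (by cases abs_cases c₀ with
          | inl h => linarith [h.1]
          | inr h => linarith [h.1])
      have h2 : Real.exp u₀ ≤ 2 * Real.cosh u₀ := exp_le_two_mul_cosh u₀
      calc Real.exp (-(c₀+δ/2)) * Real.exp u₀
          ≤ Real.exp (|c₀|+δ) * (2*Real.cosh u₀) :=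
            mul_le_mul h1 h2 (le_of_lt (Real.exp_pos _)) (le_of_lt (Real.exp_pos _))
        _ = 2*Real.exp (|c₀|+δ) * Real.cosh u₀ := by ring
    calc ‖deriv F 0‖ ≤ (16+16*(N+1)/δ) * Real.exp (u₀ - (c₀ + δ/2)) := hcb
      _ ≤ (16+16*(N+1)/δ) * (2*Real.exp (|c₀|+δ) * Real.cosh u₀) := hstep
      _ = ((16+16*(N+1)/δ) * (2*Real.exp (|c₀|+δ))) * Real.cosh u₀ := by ring
      _ ≤ _ := by nlinarith

lemma kobayashi_nonneg (M : Set E) (z ξ : E) : 0 ≤ kobayashi M z ξ := by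
  apply Real.sInf_nonneg
  rintro r ⟨φ, a, -, -, -, -, rfl⟩
  positivity

lemma kobayashi_le (M : Set E) {z ξ : E} {φ : ℂ → E} {a : ℂ}
    (hφ : AnalyticDiskIn M φ) (h0 : φ 0 = z) (hd : deriv φ 0 = a • ξ) (ha : a ≠ 0) :
    kobayashi M z ξ ≤ 1 / ‖a‖ := by
  apply csInf_le
  · exact ⟨0, by rintro r ⟨ψ, b, -, -, -, -, rfl⟩; positivity⟩
  · exact ⟨φ, a, hφ, h0, hd, ha, rfl⟩

lemma core {M : Set E} (hM : IsOpen M) {f : E → ℂ} (hf : DifferentiableOn ℂ f M)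
    (lam : ℂ) (N : ℕ) (c₀ δ : ℝ) (hδ : 0 < δ)
    (hdense : ∀ c ∈ Set.Ioo (c₀ - δ) (c₀ + δ), ∀ ε > 0, ∃ c' : ℝ,
      (∀ z ∈ M, (lam * f z).re = c' → ∀ ξ : E, ‖fderiv ℂ f z ξ‖ ≤ (N:ℝ) * kobayashi M z ξ) ∧
      |c' - c| < ε)
    {φ : ℂ → E} (hφ : AnalyticDiskIn M φ) :
    ‖deriv (fun t => lam * f (φ t)) 0‖ ≤
      ((4*(N:ℝ)*‖lam‖) + (16 + 16*((4*(N:ℝ)*‖lam‖)+1)/δ) * (2 * Real.exp (|c₀| + δ))) *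
        Real.cosh ((lam * f (φ 0)).re) := by
  set F : ℂ → ℂ := fun t => lam * f (φ t) with hFdef
  set Nb : ℝ := 4*(N:ℝ)*‖lam‖ with hNbdef
  have hNb : 0 ≤ Nb := by positivity
  have hUopen : IsOpen unitDisk := isOpen_ball
  obtain ⟨hφdiff, hφmaps⟩ := hφ
  have hFd : ∀ t ∈ unitDisk, HasDerivAt F (lam * (fderiv ℂ f (φ t) (deriv φ t))) t := by
    intro t ht
    have hφt : HasDerivAt φ (deriv φ t) t :=
      (hφdiff.differentiableAt (hUopen.mem_nhds ht)).hasDerivAt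
    have hfz : HasFDerivAt f (fderiv ℂ f (φ t)) (φ t) :=
      (hf.differentiableAt (hM.mem_nhds (hφmaps ht))).hasFDerivAt
    have hcomp : HasDerivAt (fun s => f (φ s)) (fderiv ℂ f (φ t) (deriv φ t)) t :=
      hfz.comp_hasDerivAt t hφt
    exact hcomp.const_mul lam
  have hFdiff : DifferentiableOn ℂ F unitDisk :=
    fun t ht => ((hFd t ht).differentiableAt).differentiableWithinAt
  have hFderiv_eq : ∀ t ∈ unitDisk, deriv F t = lam * fderiv ℂ f (φ t) (deriv φ t) :=
    fun t ht => (hFd t ht).deriv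
  -- continuity of deriv F
  have hFanal : AnalyticOnNhd ℂ F unitDisk := hFdiff.analyticOnNhd hUopen
  have hF'cont : ∀ ζ ∈ unitDisk, ContinuousAt (deriv F) ζ :=
    fun ζ hζ => (hFanal.deriv ζ hζ).continuousAt
  -- (*) : bound at points whose level has the dense property
  have hstar : ∀ ζ ∈ ball (0:ℂ) (3/4:ℝ),
      (∀ z ∈ M, (lam * f z).re = (F ζ).re → ∀ ξ : E,
        ‖fderiv ℂ f z ξ‖ ≤ (N:ℝ) * kobayashi M z ξ) → ‖deriv F ζ‖ ≤ Nb := by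
    intro ζ hζ hP
    have hζ1 : ζ ∈ unitDisk := ball_subset_ball (by norm_num) hζ
    have hζn : ‖ζ‖ < 3/4 := mem_ball_zero_iff.1 hζ
    set ψd : ℂ → E := fun t => φ (ζ + (4⁻¹:ℂ) * t) with hψddef
    have hmapsin : ∀ t ∈ unitDisk, ζ + (4⁻¹:ℂ)*t ∈ unitDisk := by
      intro t ht
      have htn : ‖t‖ < 1 := mem_ball_zero_iff.1 ht
      rw [unitDisk, mem_ball_zero_iff]
      calc ‖ζ + (4⁻¹:ℂ)*t‖ ≤ ‖ζ‖ + ‖(4⁻¹:ℂ)*t‖ := norm_add_le _ _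
        _ = ‖ζ‖ + 4⁻¹ * ‖t‖ := by rw [norm_mul]; norm_num
        _ < 3/4 + 4⁻¹ * 1 := by
            apply add_lt_add_of_lt_of_le hζn
            apply mul_le_mul_of_nonneg_left (le_of_lt htn) (by norm_num)
        _ = 1 := by norm_num
    have hinner : ∀ t : ℂ, HasDerivAt (fun s : ℂ => ζ + (4⁻¹:ℂ) * s) (4⁻¹:ℂ) t := by
      intro t
      simpa using ((hasDerivAt_id t).const_mul (4⁻¹:ℂ)).const_add ζ
    have hψdiff : DifferentiableOn ℂ ψd unitDisk := by
      intro t ht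
      exact ((hφdiff.differentiableAt (hUopen.mem_nhds (hmapsin t ht))).comp t
        ((hinner t).differentiableAt)).differentiableWithinAt
    have hψmaps : Set.MapsTo ψd unitDisk M := fun t ht => hφmaps (hmapsin t ht)
    have hψ0 : ψd 0 = φ ζ := by simp [hψddef]
    have hφζ : HasDerivAt φ (deriv φ ζ) ζ :=
      (hφdiff.differentiableAt (hUopen.mem_nhds hζ1)).hasDerivAt
    have hψderiv : deriv ψd 0 = (4⁻¹:ℂ) • (deriv φ ζ) := by
      have hc := HasDerivAt.scomp_of_eq (hg := hφζ) (hh := hinner 0) (hy := by simp)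
      exact hc.deriv
    have hkle : kobayashi M (φ ζ) (deriv φ ζ) ≤ 1 / ‖(4⁻¹:ℂ)‖ :=
      kobayashi_le M ⟨hψdiff, hψmaps⟩ hψ0 hψderiv (by norm_num)
    have hk4 : kobayashi M (φ ζ) (deriv φ ζ) ≤ 4 := by
      have hnrm : ‖(4⁻¹:ℂ)‖ = 4⁻¹ := by norm_num
      rw [hnrm] at hkle
      simpa using hkle
    have hDf := hP (φ ζ) (hφmaps hζ1) rfl (deriv φ ζ)
    have hknn := kobayashi_nonneg M (φ ζ) (deriv φ ζ)
    rw [hFderiv_eq ζ hζ1, norm_mul]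
    calc ‖lam‖ * ‖fderiv ℂ f (φ ζ) (deriv φ ζ)‖
        ≤ ‖lam‖ * ((N:ℝ) * kobayashi M (φ ζ) (deriv φ ζ)) :=
          mul_le_mul_of_nonneg_left hDf (norm_nonneg lam)
      _ ≤ ‖lam‖ * ((N:ℝ) * 4) := by
          apply mul_le_mul_of_nonneg_left _ (norm_nonneg lam)
          exact mul_le_mul_of_nonneg_left hk4 (Nat.cast_nonneg N)
      _ = Nb := by rw [hNbdef]; ring
  -- Lemma M : density upgrade
  have hstrip : ∀ ζ ∈ ball (0:ℂ) (8⁻¹:ℝ), (F ζ).re ∈ Set.Ioo (c₀-δ) (c₀+δ) →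
      ‖deriv F ζ‖ ≤ Nb := by
    intro ζ hζ hre
    have hζn : ‖ζ‖ < 8⁻¹ := mem_ball_zero_iff.1 hζ
    have hζ34 : ζ ∈ ball (0:ℂ) (3/4:ℝ) := ball_subset_ball (by norm_num) hζ
    have hζ1 : ζ ∈ unitDisk := ball_subset_ball (by norm_num) hζ
    refine le_of_forall_pos_le_add ?_
    intro ε hε
    by_cases hzero : deriv F ζ = 0
    · rw [hzero, norm_zero]; positivity
    obtain ⟨ρ, hρpos, hρ⟩ := Metric.continuousAt_iff.1 (hF'cont ζ hζ1) ε hε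
    set c : ℂ := deriv F ζ with hcdef
    have hcn : (0:ℝ) < ‖c‖ := norm_pos_iff.2 hzero
    set e : ℂ := (starRingEnd ℂ) c / (‖c‖ : ℂ) with hedef
    have hene : ‖e‖ = 1 := by
      rw [hedef, norm_div, RCLike.norm_conj]
      rw [Complex.norm_real, Real.norm_eq_abs, abs_of_pos hcn, div_self (ne_of_gt hcn)]
    have hce : (c * e).re = ‖c‖ := by
      have h1 : c * e = ↑(Complex.normSq c / ‖c‖) := by
        rw [hedef, Complex.ofReal_div, mul_div_assoc', Complex.mul_conj]
      rw [h1, Complex.ofReal_re, Complex.normSq_eq_norm_sq,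
        pow_two, mul_div_assoc, div_self (ne_of_gt hcn), mul_one]
    -- the real path
    set g : ℝ → ℝ := fun s => (F (ζ + ↑s * e)).re with hgdef
    have hpath : ∀ s : ℝ, |s| < 1/2 → (ζ + ↑s*e) ∈ unitDisk := by
      intro s hs
      rw [unitDisk, mem_ball_zero_iff]
      calc ‖ζ + ↑s*e‖ ≤ ‖ζ‖ + ‖(↑s:ℂ)*e‖ := norm_add_le _ _
        _ = ‖ζ‖ + |s| := by
            rw [norm_mul, hene, mul_one, Complex.norm_real, Real.norm_eq_abs]
        _ < 8⁻¹ + 1/2 := add_lt_add hζn hs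
        _ < 1 := by norm_num
    have hpath34 : ∀ s : ℝ, |s| < 1/2 → (ζ + ↑s*e) ∈ ball (0:ℂ) (3/4:ℝ) := by
      intro s hs
      rw [mem_ball_zero_iff]
      calc ‖ζ + ↑s*e‖ ≤ ‖ζ‖ + ‖(↑s:ℂ)*e‖ := norm_add_le _ _
        _ = ‖ζ‖ + |s| := by
            rw [norm_mul, hene, mul_one, Complex.norm_real, Real.norm_eq_abs]
        _ < 8⁻¹ + 1/2 := add_lt_add hζn hs
        _ < 3/4 := by norm_num
    have hgd : ∀ s : ℝ, |s| < 1/2 →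
        HasDerivAt g ((deriv F (ζ + ↑s*e) * e).re) s := by
      intro s hs
      have hFat : HasDerivAt F (deriv F (ζ+↑s*e)) (ζ+↑s*e) :=
        (hFdiff.differentiableAt (hUopen.mem_nhds (hpath s hs))).hasDerivAt
      have hin : HasDerivAt (fun w : ℂ => ζ + w * e) e (↑s:ℂ) := by
        simpa using ((hasDerivAt_id (↑s:ℂ)).mul_const e).const_add ζ
      have hcomp0 := hFat.comp (↑s:ℂ) hin
      have hcomp : HasDerivAt (fun w : ℂ => F (ζ + w*e)) (deriv F (ζ+↑s*e) * e) (↑s:ℂ) :=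
        hcomp0
      exact hcomp.real_of_complex
    have hg0 : g 0 = (F ζ).re := by simp [hgdef]
    have hg0d : HasDerivAt g ‖c‖ 0 := by
      have h1 := hgd 0 (by norm_num)
      have h2 : ζ + ↑(0:ℝ)*e = ζ := by simp
      rw [h2] at h1
      rwa [← hcdef, hce] at h1
    -- interval margin
    set ηI : ℝ := min (c₀ + δ - (F ζ).re) ((F ζ).re - (c₀ - δ)) / 2 with hηIdef
    have hηIpos : 0 < ηI := by
      rw [hηIdef]
      have h1 := hre.1
      have h2 := hre.2
      have : (0:ℝ) < min (c₀ + δ - (F ζ).re) ((F ζ).re - (c₀ - δ)) :=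
        lt_min (by linarith) (by linarith)
      linarith
    obtain ⟨s₁, hs₁pos, hs₁⟩ := Metric.continuousAt_iff.1 (hg0d.continuousAt) ηI hηIpos
    set smin : ℝ := min (min (ρ/2) 4⁻¹) (s₁/2) with hsmindef
    have hsminpos : 0 < smin := by
      apply lt_min (lt_min (by linarith) (by norm_num)) (by linarith)
    have hsminhalf : smin < 1/2 := by
      calc smin ≤ min (ρ/2) 4⁻¹ := min_le_left _ _
        _ ≤ 4⁻¹ := min_le_right _ _
        _ < 1/2 := by norm_num
    -- find s with g s ≠ g 0
    have hsex : ∃ s : ℝ, 0 < s ∧ s ≤ smin ∧ g s ≠ g 0 := by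
      by_contra hcon
      push_neg at hcon
      have hconst : ∀ s ∈ Icc (0:ℝ) smin, g s = g 0 := by
        intro s hs
        rcases eq_or_lt_of_le hs.1 with h|h
        · rw [← h]
        · exact hcon s h hs.2
      have h1 : HasDerivWithinAt g 0 (Icc 0 smin) 0 := by
        apply (hasDerivWithinAt_const (0:ℝ) (Icc (0:ℝ) smin) (g 0)).congr hconst
        exact hconst 0 ⟨le_refl 0, le_of_lt hsminpos⟩
      have h2 : HasDerivWithinAt g ‖c‖ (Icc 0 smin) 0 := hg0d.hasDerivWithinAt
      have hud : UniqueDiffWithinAt ℝ (Icc (0:ℝ) smin) 0 :=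
        uniqueDiffOn_Icc hsminpos 0 ⟨le_refl 0, le_of_lt hsminpos⟩
      have hA := h1.derivWithin hud
      have hB := h2.derivWithin hud
      rw [hA] at hB
      exact (ne_of_gt hcn) hB.symm
    obtain ⟨s, hspos, hssmin, hgne⟩ := hsex
    have hs12 : |s| < 1/2 := by
      rw [abs_of_pos hspos]; linarith
    have hss₁ : |g s - g 0| < ηI := by
      have hd : dist s 0 < s₁ := by
        rw [Real.dist_eq, sub_zero, abs_of_pos hspos]
        calc s ≤ smin := hssmin
          _ ≤ s₁/2 := min_le_right _ _
          _ < s₁ := by linarith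
      have := hs₁ hd
      rwa [Real.dist_eq] at this
    -- choose c'
    set mid : ℝ := (g 0 + g s)/2 with hmiddef
    set gap : ℝ := |g s - g 0|/2 with hgapdef
    have hgappos : 0 < gap := by
      rw [hgapdef]
      have : g s - g 0 ≠ 0 := sub_ne_zero.2 hgne
      have := abs_pos.2 this
      linarith
    have hmidI : mid ∈ Set.Ioo (c₀-δ) (c₀+δ) := by
      have h1 := hre.1
      have h2 := hre.2
      have hup : min (c₀ + δ - (F ζ).re) ((F ζ).re - (c₀ - δ)) ≤ c₀ + δ - (F ζ).re :=
        min_le_left _ _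
      have hdn : min (c₀ + δ - (F ζ).re) ((F ζ).re - (c₀ - δ)) ≤ (F ζ).re - (c₀ - δ) :=
        min_le_right _ _
      have habs := abs_lt.1 hss₁
      constructor
      · rw [hmiddef]
        rw [hg0] at habs ⊢
        rw [hηIdef] at habs
        rcases habs with ⟨ha, hb⟩
        linarith
      · rw [hmiddef]
        rw [hg0] at habs ⊢
        rw [hηIdef] at habs
        rcases habs with ⟨ha, hb⟩
        linarith
    obtain ⟨c', hc'P, hc'dist⟩ := hdense mid hmidI gap hgappos
    have hc'uIcc : c' ∈ Set.uIcc (g 0) (g s) := by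
      rw [Set.mem_uIcc]
      have habs := abs_lt.1 hc'dist
      rcases le_or_gt (g 0) (g s) with h|h
      · left
        constructor
        · rw [hmiddef] at habs
          have : |g s - g 0| = g s - g 0 := abs_of_nonneg (by linarith)
          rw [hgapdef, this] at habs
          linarith [habs.1]
        · rw [hmiddef] at habs
          have : |g s - g 0| = g s - g 0 := abs_of_nonneg (by linarith)
          rw [hgapdef, this] at habs
          linarith [habs.2]
      · right
        constructor
        · rw [hmiddef] at habs
          have : |g s - g 0| = -(g s - g 0) := abs_of_neg (by linarith)
          rw [hgapdef, this] at habs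
          linarith [habs.1]
        · rw [hmiddef] at habs
          have : |g s - g 0| = -(g s - g 0) := abs_of_neg (by linarith)
          rw [hgapdef, this] at habs
          linarith [habs.2]
    have hgcont : ContinuousOn g (Set.uIcc 0 s) := by
      intro t ht
      rw [Set.uIcc_of_le (le_of_lt hspos)] at ht
      have ht12 : |t| < 1/2 := by
        rw [abs_of_nonneg ht.1]
        calc t ≤ s := ht.2
          _ ≤ smin := hssmin
          _ < 1/2 := hsminhalf
      exact (hgd t ht12).continuousAt.continuousWithinAt
    obtain ⟨s', hs'mem, hgs'⟩ := intermediate_value_uIcc hgcont hc'uIcc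
    rw [Set.uIcc_of_le (le_of_lt hspos)] at hs'mem
    set ζ' : ℂ := ζ + ↑s' * e with hζ'def
    have hs'12 : |s'| < 1/2 := by
      rw [abs_of_nonneg hs'mem.1]
      calc s' ≤ s := hs'mem.2
        _ ≤ smin := hssmin
        _ < 1/2 := hsminhalf
    have hζ'ball : ζ' ∈ ball (0:ℂ) (3/4:ℝ) := hpath34 s' hs'12
    have hFζ're : (F ζ').re = c' := hgs'
    have hb := hstar ζ' hζ'ball (by
      intro z hz hrez ξ
      apply hc'P z hz _ ξ
      rw [hrez, hFζ're])
    have hdist : dist ζ' ζ < ρ := by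
      rw [hζ'def, dist_eq_norm]
      have : ζ + ↑s' * e - ζ = ↑s' * e := by ring
      rw [this, norm_mul, hene, mul_one, Complex.norm_real, Real.norm_eq_abs,
        abs_of_nonneg hs'mem.1]
      calc s' ≤ s := hs'mem.2
        _ ≤ smin := hssmin
        _ ≤ ρ/2 := le_trans (min_le_left _ _) (min_le_left _ _)
        _ < ρ := by linarith
    have hclose := hρ hdist
    rw [dist_eq_norm] at hclose
    calc ‖deriv F ζ‖ = ‖deriv F ζ' - (deriv F ζ' - deriv F ζ)‖ := by ring_nf
      _ ≤ ‖deriv F ζ'‖ + ‖deriv F ζ' - deriv F ζ‖ := norm_sub_le _ _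
      _ ≤ Nb + ε := add_le_add hb (le_of_lt hclose)
  -- apply strip_to_global
  have hfinal := strip_to_global hδ hNb (show DifferentiableOn ℂ F (ball 0 1) from hFdiff)
    hstrip
  simpa [hFdef] using hfinal

/-- If `M_L < ∞` for every line `L`, then `f` is semi-Bloch. -/
theorem line_bound_implies_semiBloch (M : Set E) (hM : IsOpen M)
    (hk : KobayashiNondegenerate M) (f : E → ℂ) (hf : DifferentiableOn ℂ f M)
    (hL : ∀ L : Set ℂ, IsLine L → ∃ C : ℝ, ∀ z ∈ M, f z ∈ L → ∀ ξ : E,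
      ‖fderiv ℂ f z ξ‖ ≤ C * kobayashi M z ξ) :
    SemiBloch M f := by
  intro lam
  by_cases hlam : lam = 0
  · subst hlam
    refine ⟨0, ?_⟩
    intro z hz ξ
    have hconst : (fun w => Complex.exp (0 * f w)) = fun _ : E => (1:ℂ) := by
      funext w; simp
    rw [hconst, fderiv_fun_const]
    simp [sphMetric]
  -- the family of lines Re (lam w) = c
  have hisline : ∀ c : ℝ,
      IsLine {w : ℂ | ∃ t : ℝ, w = (c:ℂ)/lam + ↑t * (Complex.I/lam)} := by
    intro c
    exact ⟨(c:ℂ)/lam, Complex.I/lam, div_ne_zero Complex.I_ne_zero hlam, rfl⟩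
  have hmem : ∀ (c : ℝ) (w : ℂ),
      w ∈ {w : ℂ | ∃ t : ℝ, w = (c:ℂ)/lam + ↑t * (Complex.I/lam)} ↔ (lam * w).re = c := by
    intro c w
    constructor
    · rintro ⟨t, rfl⟩
      have h1 : lam * ((c:ℂ)/lam + ↑t * (Complex.I/lam)) = ↑c + ↑t * Complex.I := by
        field_simp
      rw [h1]
      simp
    · intro hre
      refine ⟨(lam*w).im, ?_⟩
      have hlw : lam * w = ↑c + ↑((lam*w).im) * Complex.I := by
        apply Complex.ext
        · simp [hre]
        · simp
      have h2 : (↑c)/lam + ↑((lam*w).im) * (Complex.I/lam)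
          = (↑c + ↑((lam*w).im) * Complex.I)/lam := by ring
      rw [h2, ← hlw, mul_div_cancel_left₀ _ hlam]
  -- property and Baire
  have hcover : ∀ c : ℝ, ∃ n : ℕ, ∀ z ∈ M, (lam * f z).re = c → ∀ ξ : E,
      ‖fderiv ℂ f z ξ‖ ≤ (n:ℝ) * kobayashi M z ξ := by
    intro c
    obtain ⟨C, hC⟩ := hL _ (hisline c)
    obtain ⟨n, hn⟩ := exists_nat_ge (max C 0)
    refine ⟨n, fun z hz hrez ξ => ?_⟩
    have hmemL : f z ∈ {w : ℂ | ∃ t : ℝ, w = (c:ℂ)/lam + ↑t * (Complex.I/lam)} :=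
      (hmem c (f z)).2 hrez
    calc ‖fderiv ℂ f z ξ‖ ≤ C * kobayashi M z ξ := hC z hz hmemL ξ
      _ ≤ (n:ℝ) * kobayashi M z ξ := by
          apply mul_le_mul_of_nonneg_right _ (kobayashi_nonneg M z ξ)
          exact le_trans (le_max_left C 0) hn
  have hUnion : (⋃ n : ℕ, closure {c : ℝ | ∀ z ∈ M, (lam * f z).re = c → ∀ ξ : E,
      ‖fderiv ℂ f z ξ‖ ≤ (n:ℝ) * kobayashi M z ξ}) = univ := by
    apply eq_univ_of_forall
    intro c
    obtain ⟨n, hn⟩ := hcover c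
    exact mem_iUnion.2 ⟨n, subset_closure hn⟩
  obtain ⟨N, hN⟩ := nonempty_interior_of_iUnion_of_closed
    (fun n : ℕ => isClosed_closure (s := {c : ℝ | ∀ z ∈ M, (lam * f z).re = c → ∀ ξ : E,
      ‖fderiv ℂ f z ξ‖ ≤ (n:ℝ) * kobayashi M z ξ})) hUnion
  obtain ⟨c₀, hc₀⟩ := hN
  rw [mem_interior_iff_mem_nhds, Metric.mem_nhds_iff] at hc₀
  obtain ⟨δ, hδpos, hδsub⟩ := hc₀
  have hdense : ∀ c ∈ Set.Ioo (c₀-δ) (c₀+δ), ∀ ε > 0, ∃ c' : ℝ,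
      (∀ z ∈ M, (lam * f z).re = c' → ∀ ξ : E,
        ‖fderiv ℂ f z ξ‖ ≤ (N:ℝ) * kobayashi M z ξ) ∧ |c' - c| < ε := by
    intro c hc ε hε
    have hcball : c ∈ ball c₀ δ := by rw [Real.ball_eq_Ioo]; exact hc
    have hcl := hδsub hcball
    rw [Metric.mem_closure_iff] at hcl
    obtain ⟨c', hc'P, hc'd⟩ := hcl ε hε
    refine ⟨c', hc'P, ?_⟩
    rw [← Real.dist_eq, dist_comm]
    exact hc'd
  -- the constant
  set Cst : ℝ := (4*(N:ℝ)*‖lam‖) + (16 + 16*((4*(N:ℝ)*‖lam‖)+1)/δ) * (2 * Real.exp (|c₀| + δ))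
    with hCstdef
  have hCstpos : 0 < Cst := by
    rw [hCstdef]
    have h1 : (0:ℝ) ≤ 4*(N:ℝ)*‖lam‖ := by positivity
    have h2 : (0:ℝ) < 16 + 16*((4*(N:ℝ)*‖lam‖)+1)/δ := by
      have h4 : (0:ℝ) ≤ 16*((4*(N:ℝ)*‖lam‖)+1)/δ :=
        div_nonneg (by positivity) (le_of_lt hδpos)
      linarith
    have h3 : (0:ℝ) < 2 * Real.exp (|c₀| + δ) := by positivity
    nlinarith
  refine ⟨Cst, ?_⟩
  intro z hz ξ
  -- compute the fderiv of the exponential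
  have hfz : HasFDerivAt f (fderiv ℂ f z) z :=
    (hf.differentiableAt (hM.mem_nhds hz)).hasFDerivAt
  have h1 : HasFDerivAt (fun w => lam * f w) (lam • fderiv ℂ f z) z := hfz.const_mul lam
  have h2 : HasFDerivAt (fun w => Complex.exp (lam * f w))
      (Complex.exp (lam * f z) • (lam • fderiv ℂ f z)) z :=
    (Complex.hasDerivAt_exp (lam * f z)).comp_hasFDerivAt z h1
  have hgfd : fderiv ℂ (fun w => Complex.exp (lam * f w)) z ξ
      = Complex.exp (lam * f z) * (lam * fderiv ℂ f z ξ) := by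
    rw [h2.fderiv]
    simp [smul_eq_mul]
  set u : ℝ := (lam * f z).re with hudef
  have hgnorm : ‖Complex.exp (lam * f z)‖ = Real.exp u := by
    rw [Complex.norm_exp]
  set X : ℝ := ‖lam‖ * ‖fderiv ℂ f z ξ‖ with hXdef
  have hXnn : 0 ≤ X := by positivity
  have hsph : sphMetric (Complex.exp (lam * f z))
      (fderiv ℂ (fun w => Complex.exp (lam * f w)) z ξ)
      = 2 * (Real.exp u * X) / (1 + (Real.exp u)^2) := by
    simp only [sphMetric, hgfd, norm_mul, hgnorm, hXdef]
  have hcoshpos : (0:ℝ) < Real.cosh u := Real.cosh_pos u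
  have hid : 2 * (Real.exp u * X) / (1 + (Real.exp u)^2) = X / Real.cosh u := by
    rw [Real.cosh_eq, Real.exp_neg]
    have h := Real.exp_pos u
    field_simp
    ring
  by_cases hxi : ξ = 0
  · subst hxi
    have : fderiv ℂ f z (0:E) = 0 := ContinuousLinearMap.map_zero _
    rw [hsph, hid, hXdef, this, norm_zero, mul_zero, zero_div]
    exact mul_nonneg (le_of_lt hCstpos) (kobayashi_nonneg M z 0)
  -- key disk bound
  have hkey : ∀ (ψ : ℂ → E) (a : ℂ), AnalyticDiskIn M ψ → ψ 0 = z →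
      deriv ψ 0 = a • ξ → a ≠ 0 → X / Real.cosh u ≤ Cst * (1/‖a‖) := by
    intro ψ a hψ hψ0 hψd ha
    have hcore := core hM hf lam N c₀ δ hδpos hdense hψ
    have h0disk : (0:ℂ) ∈ unitDisk := by
      rw [unitDisk, mem_ball, dist_self]; norm_num
    have hφt : HasDerivAt ψ (deriv ψ 0) 0 :=
      (hψ.1.differentiableAt ((isOpen_ball).mem_nhds h0disk)).hasDerivAt
    have hfz' : HasFDerivAt f (fderiv ℂ f (ψ 0)) (ψ 0) :=
      (hf.differentiableAt (hM.mem_nhds (hψ.2 h0disk))).hasFDerivAt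
    have hFd0 : HasDerivAt (fun t => lam * f (ψ t))
        (lam * fderiv ℂ f (ψ 0) (deriv ψ 0)) 0 :=
      (hfz'.comp_hasDerivAt 0 hφt).const_mul lam
    have hderiv0 : deriv (fun t => lam * f (ψ t)) 0 = lam * (a * fderiv ℂ f z ξ) := by
      rw [hFd0.deriv, hψ0, hψd]
      rw [ContinuousLinearMap.map_smul]
      rw [smul_eq_mul]
    rw [hderiv0, hψ0] at hcore
    have hnormeq : ‖lam * (a * fderiv ℂ f z ξ)‖ = ‖a‖ * X := by
      rw [norm_mul, norm_mul, hXdef]; ring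
    rw [hnormeq, ← hudef] at hcore
    have hapos : 0 < ‖a‖ := norm_pos_iff.2 ha
    rw [div_le_iff₀ hcoshpos, mul_one_div, div_mul_eq_mul_div, le_div_iff₀ hapos]
    calc X * ‖a‖ = ‖a‖ * X := mul_comm _ _
      _ ≤ Cst * Real.cosh u := hcore
  -- nonemptiness of the disk family
  have hxin : 0 < ‖ξ‖ := norm_pos_iff.2 hxi
  obtain ⟨r0, hr0pos, hball⟩ := Metric.isOpen_iff.1 hM z hz
  set aa : ℝ := r0/(2*‖ξ‖) with haadef
  have haapos : 0 < aa := by positivity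
  set ψ0 : ℂ → E := fun t => z + ((aa:ℂ) * t) • ξ with hψ0def
  have hψ0diff : DifferentiableOn ℂ ψ0 unitDisk := by
    intro t ht
    exact ((((differentiableAt_id).const_mul ((aa:ℝ):ℂ)).smul_const ξ).const_add
      z).differentiableWithinAt
  have hψ0maps : Set.MapsTo ψ0 unitDisk M := by
    intro t ht
    have htn : ‖t‖ < 1 := by
      rw [unitDisk] at ht; exact mem_ball_zero_iff.1 ht
    apply hball
    rw [mem_ball, hψ0def]
    simp only
    rw [dist_eq_norm, add_sub_cancel_left, norm_smul, norm_mul]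
    have h1 : ‖((aa:ℝ):ℂ)‖ = aa := by
      rw [Complex.norm_real, Real.norm_eq_abs, abs_of_pos haapos]
    rw [h1]
    calc aa * ‖t‖ * ‖ξ‖ ≤ aa * 1 * ‖ξ‖ := by
          apply mul_le_mul_of_nonneg_right _ (norm_nonneg ξ)
          exact mul_le_mul_of_nonneg_left (le_of_lt htn) (le_of_lt haapos)
      _ = r0/2 := by rw [haadef]; field_simp
      _ < r0 := by linarith
  have hψ0at : HasDerivAt ψ0 (((aa:ℝ):ℂ) • ξ) 0 := by
    have h1 : HasDerivAt (fun t : ℂ => ((aa:ℝ):ℂ) * t) ((aa:ℝ):ℂ) 0 := by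
      simpa using (hasDerivAt_id (0:ℂ)).const_mul ((aa:ℝ):ℂ)
    have h2 := h1.smul_const ξ
    exact h2.const_add z
  have hψ0d : deriv ψ0 0 = ((aa:ℝ):ℂ) • ξ := hψ0at.deriv
  have hψ00 : ψ0 0 = z := by
    rw [hψ0def]; simp
  have haane : ((aa:ℝ):ℂ) ≠ 0 := by
    simp only [ne_eq, Complex.ofReal_eq_zero]
    exact ne_of_gt haapos
  have hSne : { r : ℝ | ∃ (φ : ℂ → E) (a : ℂ), AnalyticDiskIn M φ ∧ φ 0 = z ∧
      deriv φ 0 = a • ξ ∧ a ≠ 0 ∧ r = 1 / ‖a‖ }.Nonempty :=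
    ⟨1/‖((aa:ℝ):ℂ)‖, ψ0, ((aa:ℝ):ℂ), ⟨hψ0diff, hψ0maps⟩, hψ00, hψ0d, haane, rfl⟩
  have hsInf : X / Real.cosh u ≤ Cst * kobayashi M z ξ := by
    have hlow : (X / Real.cosh u) / Cst ≤ kobayashi M z ξ := by
      apply le_csInf hSne
      rintro r ⟨ψ, a, hψ, h0, hd, ha, rfl⟩
      rw [div_le_iff₀ hCstpos]
      calc X / Real.cosh u ≤ Cst * (1/‖a‖) := hkey ψ a hψ h0 hd ha
        _ = 1/‖a‖ * Cst := mul_comm _ _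
    rw [div_le_iff₀ hCstpos] at hlow
    calc X / Real.cosh u ≤ kobayashi M z ξ * Cst := hlow
      _ = Cst * kobayashi M z ξ := mul_comm _ _
  rw [hsph, hid]
  exact hsInf

end
end

section
/- Let M be a Kobayashi non-degenerate complex manifold and f : M → ℂ̂ meromorphic. If for every sequence (φ_j) of holomorphic maps φ_j : 𝔻 → M the family {f ∘ φ_j} is normal, then f is a normal function on M. -/
open Metric Set Filter

noncomputable section

variable {E : Type*} [NormedAddCommGroup E] [NormedSpace ℂ E]

/-- Stereographic embedding of ℂ into the unit sphere in ℝ³. -/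
def sphEmb (w : ℂ) : EuclideanSpace ℝ (Fin 3) :=
  WithLp.toLp 2 ![2 * w.re / (1 + ‖w‖ ^ 2), 2 * w.im / (1 + ‖w‖ ^ 2), (‖w‖ ^ 2 - 1) / (1 + ‖w‖ ^ 2)]

lemma norm_sq_complex (w : ℂ) : ‖w‖ ^ 2 = w.re ^ 2 + w.im ^ 2 := by
  rw [Complex.sq_norm, Complex.normSq_apply]; ring

lemma dist_sphEmb (w z : ℂ) : dist (sphEmb w) (sphEmb z) = chordal w z := by
  rw [EuclideanSpace.dist_eq, chordal, Complex.dist_eq_re_im]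
  simp only [sphEmb, PiLp.toLp_apply, Fin.sum_univ_three, Matrix.cons_val_zero, Matrix.cons_val_one,
    Matrix.head_cons, Matrix.cons_val_two, Matrix.tail_cons, Real.dist_eq, sq_abs,
    norm_sq_complex]
  set a := w.re; set b := w.im; set c := z.re; set d := z.im
  have hp : (0:ℝ) < 1 + (a ^ 2 + b ^ 2) := by positivity
  have hq : (0:ℝ) < 1 + (c ^ 2 + d ^ 2) := by positivity
  have key : (2 * a / (1 + (a ^ 2 + b ^ 2)) - 2 * c / (1 + (c ^ 2 + d ^ 2))) ^ 2 +
      (2 * b / (1 + (a ^ 2 + b ^ 2)) - 2 * d / (1 + (c ^ 2 + d ^ 2))) ^ 2 +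
      ((a ^ 2 + b ^ 2 - 1) / (1 + (a ^ 2 + b ^ 2)) -
        (c ^ 2 + d ^ 2 - 1) / (1 + (c ^ 2 + d ^ 2))) ^ 2 =
      4 * ((a - c) ^ 2 + (b - d) ^ 2) / ((1 + (a ^ 2 + b ^ 2)) * (1 + (c ^ 2 + d ^ 2))) := by
    field_simp
    ring
  have h4 : Real.sqrt 4 = 2 := by
    rw [show (4:ℝ) = 2 ^ 2 by norm_num, Real.sqrt_sq (by norm_num : (0:ℝ) ≤ 2)]
  rw [key, Real.sqrt_div (by positivity), Real.sqrt_mul (by positivity : (0:ℝ) ≤ 4),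
    Real.sqrt_mul hp.le, h4]

lemma chordal_triangle (w₁ w₂ w₃ : ℂ) : chordal w₁ w₃ ≤ chordal w₁ w₂ + chordal w₂ w₃ := by
  rw [← dist_sphEmb, ← dist_sphEmb, ← dist_sphEmb]
  exact dist_triangle _ _ _

lemma chordal_comm (w z : ℂ) : chordal w z = chordal z w := by
  unfold chordal; rw [dist_comm]; ring

lemma chordal_nonneg (w z : ℂ) : 0 ≤ chordal w z := by
  unfold chordal; positivity

lemma chordal_le_two_dist (w z : ℂ) : chordal w z ≤ 2 * dist w z := by
  unfold chordal
  have h1 : (1:ℝ) ≤ Real.sqrt (1 + ‖w‖ ^ 2) := by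
    nlinarith [Real.sq_sqrt (show (0:ℝ) ≤ 1 + ‖w‖ ^ 2 by positivity),
      Real.sqrt_nonneg (1 + ‖w‖ ^ 2), sq_nonneg ‖w‖]
  have h2 : (1:ℝ) ≤ Real.sqrt (1 + ‖z‖ ^ 2) := by
    nlinarith [Real.sq_sqrt (show (0:ℝ) ≤ 1 + ‖z‖ ^ 2 by positivity),
      Real.sqrt_nonneg (1 + ‖z‖ ^ 2), sq_nonneg ‖z‖]
  exact div_le_self (by positivity) (by nlinarith)

lemma norm_le_of_chordal_lt {w z : ℂ}
    (h : chordal w z < 1 / Real.sqrt (1 + ‖z‖ ^ 2)) : ‖w‖ ≤ 2 * ‖z‖ + 1 := by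
  by_contra hn
  push_neg at hn
  apply absurd h (not_lt.mpr ?_)
  have hd : (‖w‖ + 1) / 2 ≤ dist w z := by
    have h1 := norm_sub_norm_le w z
    rw [dist_eq_norm]
    linarith
  have hsw : Real.sqrt (1 + ‖w‖ ^ 2) ≤ 1 + ‖w‖ := by
    rw [show (1:ℝ) + ‖w‖ = Real.sqrt ((1 + ‖w‖) ^ 2) from
      (Real.sqrt_sq (by positivity)).symm]
    exact Real.sqrt_le_sqrt (by nlinarith [norm_nonneg w])
  have hsz : 0 < Real.sqrt (1 + ‖z‖ ^ 2) := Real.sqrt_pos.mpr (by positivity)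
  have hw1 : 0 < 1 + ‖w‖ := by positivity
  calc 1 / Real.sqrt (1 + ‖z‖ ^ 2)
      = (1 + ‖w‖) * 1 / ((1 + ‖w‖) * Real.sqrt (1 + ‖z‖ ^ 2)) :=
        (mul_div_mul_left _ _ hw1.ne').symm
    _ = (1 + ‖w‖) / ((1 + ‖w‖) * Real.sqrt (1 + ‖z‖ ^ 2)) := by rw [mul_one]
    _ ≤ 2 * dist w z / (Real.sqrt (1 + ‖w‖ ^ 2) * Real.sqrt (1 + ‖z‖ ^ 2)) := by
        apply div_le_div₀ (by positivity) (by linarith) (by positivity)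
        exact mul_le_mul_of_nonneg_right hsw hsz.le
    _ = chordal w z := rfl


lemma halfBall_subset : Metric.closedBall (0:ℂ) (1/2) ⊆ unitDisk :=
  closedBall_subset_ball (by norm_num)

lemma sphMetric_le_two_norm (w ξ : ℂ) : sphMetric w ξ ≤ 2 * ‖ξ‖ := by
  unfold sphMetric
  exact div_le_self (by positivity) (by nlinarith [sq_nonneg ‖w‖])

/-- Cauchy estimate at the origin from a bound on the half-ball. -/
lemma deriv_bound_of_bound {g : ℂ → ℂ} (hg : DifferentiableOn ℂ g unitDisk) {B : ℝ}
    (hB : ∀ x ∈ Metric.closedBall (0:ℂ) (1/2), ‖g x‖ ≤ B) : ‖deriv g 0‖ ≤ 2 * B := by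
  have hsub2 : Metric.ball (0:ℂ) (1/2) ⊆ unitDisk := ball_subset_ball (by norm_num)
  have hcl : closure (Metric.ball (0:ℂ) (1/2)) = Metric.closedBall (0:ℂ) (1/2) :=
    closure_ball _ (by norm_num)
  have hd : DiffContOnCl ℂ g (Metric.ball (0:ℂ) (1/2)) :=
    ⟨hg.mono hsub2, by rw [hcl]; exact hg.continuousOn.mono halfBall_subset⟩
  have := Complex.norm_deriv_le_of_forall_mem_sphere_norm_le (by norm_num : (0:ℝ) < 1/2) hd
    (fun x hx => hB x (sphere_subset_closedBall hx))
  linarith [this, show B / (1/2 : ℝ) = 2 * B by ring]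

/-- Marty bound, divergence branch. -/
lemma marty_case2 {g : ℂ → ℂ} (hg : DifferentiableOn ℂ g unitDisk)
    (hlow : ∀ x ∈ Metric.closedBall (0:ℂ) (1/2), 1 ≤ ‖g x‖) :
    sphMetric (g 0) (deriv g 0) ≤ 4 := by
  have h0K : (0:ℂ) ∈ Metric.closedBall (0:ℂ) (1/2) := mem_closedBall_self (by norm_num)
  have hgx : ∀ x ∈ Metric.closedBall (0:ℂ) (1/2), g x ≠ 0 := by
    intro x hx h0
    have := hlow x hx
    rw [h0, norm_zero] at this; linarith
  have hgdA : ∀ x ∈ Metric.closedBall (0:ℂ) (1/2), DifferentiableAt ℂ g x := fun x hx =>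
    hg.differentiableAt ((show IsOpen unitDisk from isOpen_ball).mem_nhds (halfBall_subset hx))
  set u : ℂ → ℂ := fun x => (g x)⁻¹ with hu
  have hud : DifferentiableOn ℂ u (Metric.closedBall (0:ℂ) (1/2)) := fun x hx =>
    (((hgdA x hx).inv (hgx x hx))).differentiableWithinAt
  have hcl : closure (Metric.ball (0:ℂ) (1/2)) = Metric.closedBall (0:ℂ) (1/2) :=
    closure_ball _ (by norm_num)
  have hdc : DiffContOnCl ℂ u (Metric.ball (0:ℂ) (1/2)) :=
    ⟨hud.mono ball_subset_closedBall, by rw [hcl]; exact hud.continuousOn⟩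
  have hub : ‖deriv u 0‖ ≤ 2 := by
    have := Complex.norm_deriv_le_of_forall_mem_sphere_norm_le (by norm_num : (0:ℝ) < 1/2) hdc
      (fun x hx => by
        have hx' := sphere_subset_closedBall hx
        have := hlow x hx'
        simp only [hu, norm_inv]
        exact inv_le_one_of_one_le₀ this)
    linarith [this, show (1:ℝ) / (1/2 : ℝ) = 2 by norm_num]
  have hder : deriv u 0 = -deriv g 0 / g 0 ^ 2 := deriv_inv'' (hgdA 0 h0K) (hgx 0 h0K)
  have hg0 : g 0 ≠ 0 := hgx 0 h0K
  have hgd : ‖deriv g 0‖ ≤ 2 * ‖g 0‖ ^ 2 := by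
    have : ‖deriv u 0‖ = ‖deriv g 0‖ / ‖g 0‖ ^ 2 := by
      rw [hder]; rw [norm_div, norm_neg, norm_pow]
    rw [this] at hub
    have hpos : (0:ℝ) < ‖g 0‖ ^ 2 := pow_pos (norm_pos_iff.mpr hg0) 2
    have := (div_le_iff₀ hpos).mp hub
    linarith
  unfold sphMetric
  rw [div_le_iff₀ (by positivity)]
  nlinarith [sq_nonneg ‖g 0‖]

/-- Uniform boundedness on the half-ball, convergence branch. -/
lemma case1_bound {g : ℕ → ℂ → ℂ} (hg : ∀ j, ContinuousOn (g j) unitDisk) {h : ℂ → ℂ}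
    (H : ∀ ε > 0, ∀ᶠ j in atTop, ∀ x ∈ Metric.closedBall (0:ℂ) (1/2),
      chordal (g j x) (h x) < ε) :
    ∃ B, ∀ᶠ j in atTop, ∀ x ∈ Metric.closedBall (0:ℂ) (1/2), ‖g j x‖ ≤ B := by
  set K := Metric.closedBall (0:ℂ) (1/2) with hKdef
  have hK : IsCompact K := isCompact_closedBall _ _
  have hP : ∀ x0 ∈ K, ∃ δ, 0 < δ ∧ ∃ B, ∀ᶠ j in atTop,
      ∀ x ∈ Metric.ball x0 δ ∩ K, ‖g j x‖ ≤ B := by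
    intro x0 hx0
    set τ := 1 / Real.sqrt (1 + ‖h x0‖ ^ 2) with hτdef
    have hτ : 0 < τ := by positivity
    obtain ⟨N, hN⟩ := eventually_atTop.mp (H (τ/5) (by positivity))
    have hc : ContinuousAt (g N) x0 :=
      (hg N).continuousAt ((show IsOpen unitDisk from isOpen_ball).mem_nhds (halfBall_subset hx0))
    obtain ⟨δ, hδpos, hδ⟩ := Metric.continuousAt_iff.mp hc (τ/10) (by positivity)
    refine ⟨δ, hδpos, 2 * ‖h x0‖ + 1, eventually_atTop.mpr ⟨N, ?_⟩⟩
    rintro j hj x ⟨hxb, hxK⟩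
    have e1 : chordal (g j x) (h x) < τ/5 := hN j hj x hxK
    have e2 : chordal (h x) (g N x) < τ/5 := by
      rw [chordal_comm]; exact hN N le_rfl x hxK
    have e3 : chordal (g N x) (g N x0) < τ/5 := by
      have := hδ (mem_ball.mp hxb)
      have h2 := chordal_le_two_dist (g N x) (g N x0)
      linarith
    have e4 : chordal (g N x0) (h x0) < τ/5 := hN N le_rfl x0 hx0
    have tri : chordal (g j x) (h x0) < τ := by
      have t1 := chordal_triangle (g j x) (h x) (h x0)
      have t2 := chordal_triangle (h x) (g N x) (h x0)
      have t3 := chordal_triangle (g N x) (g N x0) (h x0)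
      linarith
    exact norm_le_of_chordal_lt tri
  choose! δ hδpos B hB using hP
  obtain ⟨t, htK, hcov⟩ := hK.elim_nhds_subcover (fun x0 => Metric.ball x0 (δ x0))
    (fun x hx => ball_mem_nhds x (hδpos x hx))
  refine ⟨((t.sup fun x => ⌈B x⌉₊ : ℕ) : ℝ), ?_⟩
  have hev : ∀ᶠ j in atTop, ∀ x0 ∈ t, ∀ x ∈ Metric.ball x0 (δ x0) ∩ K, ‖g j x‖ ≤ B x0 :=
    (eventually_all_finset t).mpr fun x0 hx0 => hB x0 (htK x0 hx0)
  filter_upwards [hev] with j hj x hx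
  obtain ⟨x0, hx0t, hxb⟩ := mem_iUnion₂.mp (hcov hx)
  calc ‖g j x‖ ≤ B x0 := hj x0 hx0t x ⟨hxb, hx⟩
    _ ≤ (⌈B x0⌉₊ : ℝ) := Nat.le_ceil _
    _ ≤ ((t.sup fun x => ⌈B x⌉₊ : ℕ) : ℝ) := Nat.cast_le.mpr (Finset.le_sup (f := fun x => ⌈B x⌉₊) hx0t)

lemma finisher {ρ : ℕ → ℝ} {t : ℕ → ℕ} (htm : StrictMono t)
    (hρ : ∀ j, ((j : ℕ) : ℝ) / 2 < ρ j) {C0 : ℝ}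
    (hev : ∀ᶠ j in atTop, ρ (t j) ≤ C0) : False := by
  obtain ⟨N, hN⟩ := eventually_atTop.mp hev
  set j := max N (⌈2 * C0⌉₊ + 1) with hj
  have h1 : ρ (t j) ≤ C0 := hN j (le_max_left _ _)
  have h2 : ((t j : ℕ) : ℝ) / 2 < ρ (t j) := hρ (t j)
  have h3 : ((j : ℕ) : ℝ) ≤ ((t j : ℕ) : ℝ) := Nat.cast_le.mpr htm.le_apply
  have h4 : ((⌈2 * C0⌉₊ + 1 : ℕ) : ℝ) ≤ ((j : ℕ) : ℝ) := Nat.cast_le.mpr (le_max_right _ _)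
  have h5 : 2 * C0 ≤ (⌈2 * C0⌉₊ : ℝ) := Nat.le_ceil _
  push_cast at h4
  linarith

/-- Converse of the Cima–Krantz characterisation: if `{f ∘ φ_j}` is a normal family
for every sequence of analytic disks `φ_j` in a Kobayashi non-degenerate `M`,
then `f` is normal. -/
theorem normal_family_implies_normal (M : Set E) (hM : IsOpen M)
    (hk : KobayashiNondegenerate M) (f : E → ℂ) (hf : DifferentiableOn ℂ f M)
    (h : ∀ φ : ℕ → ℂ → E, (∀ j, AnalyticDiskIn M (φ j)) →
      SphNormalFamily (fun j => f ∘ φ j)) :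
    NormalOn M f := by
  by_contra hN
  rw [NormalOn] at hN
  push_neg at hN
  choose z hz ξ hξ using fun j : ℕ => hN (j : ℝ)
  -- kobayashi is nonnegative
  have hk0 : ∀ (z' : E) (ξ' : E), 0 ≤ kobayashi M z' ξ' := by
    intro z' ξ'
    apply Real.sInf_nonneg
    rintro r ⟨φ, a, _, _, _, ha, rfl⟩
    positivity
  -- the directions are nonzero
  have hξne : ∀ j, ξ j ≠ 0 := by
    intro j hξ0
    have hgt := hξ j
    rw [hξ0] at hgt
    have h0 : sphMetric (f (z j)) (fderiv ℂ f (z j) (0 : E)) = 0 := by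
      simp [sphMetric]
    rw [h0] at hgt
    exact absurd hgt (not_lt.mpr (mul_nonneg (Nat.cast_nonneg j) (hk0 _ _)))
  have hkpos : ∀ j, 0 < kobayashi M (z j) (ξ j) := fun j => hk (z j) (hz j) (ξ j) (hξne j)
  -- choose near-extremal analytic disks
  have hP : ∀ j, ∃ (φ : ℂ → E) (a : ℂ), AnalyticDiskIn M φ ∧ φ 0 = z j ∧
      deriv φ 0 = a • ξ j ∧ a ≠ 0 ∧ 1 / ‖a‖ < 2 * kobayashi M (z j) (ξ j) := by
    intro j
    set S := { r : ℝ | ∃ (φ : ℂ → E) (a : ℂ), AnalyticDiskIn M φ ∧ φ 0 = z j ∧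
      deriv φ 0 = a • ξ j ∧ a ≠ 0 ∧ r = 1 / ‖a‖ } with hS
    have hkob : kobayashi M (z j) (ξ j) = sInf S := rfl
    have hSne : S.Nonempty := by
      by_contra hemp
      rw [Set.not_nonempty_iff_eq_empty] at hemp
      have := hkpos j
      rw [hkob, hemp, Real.sInf_empty] at this
      exact lt_irrefl 0 this
    have hlt : sInf S < 2 * kobayashi M (z j) (ξ j) := by
      rw [← hkob]; linarith [hkpos j]
    obtain ⟨r, hrS, hr⟩ := exists_lt_of_csInf_lt hSne hlt
    obtain ⟨φ, a, hd, h0, hde, ha, rfl⟩ := hrS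
    exact ⟨φ, a, hd, h0, hde, ha, hr⟩
  choose φ a hdisk h0 hderiv hane hlt using hP
  have h0mem : (0:ℂ) ∈ unitDisk := mem_ball_self (by norm_num)
  have hopen : IsOpen unitDisk := isOpen_ball
  -- derivative of the compositions
  have hGdiff : ∀ j, DifferentiableOn ℂ (f ∘ φ j) unitDisk := fun j =>
    hf.comp (hdisk j).1 (hdisk j).2
  have hGd : ∀ j, deriv (f ∘ φ j) 0 = a j • fderiv ℂ f (z j) (ξ j) := by
    intro j
    have hfd : DifferentiableAt ℂ f (z j) := hf.differentiableAt (hM.mem_nhds (hz j))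
    have hφd : DifferentiableAt ℂ (φ j) 0 := (hdisk j).1.differentiableAt (hopen.mem_nhds h0mem)
    rw [← h0 j] at hfd
    have h1 : HasDerivAt (f ∘ φ j) (fderiv ℂ f (φ j 0) (deriv (φ j) 0)) 0 :=
      hfd.hasFDerivAt.comp_hasDerivAt 0 hφd.hasDerivAt
    rw [h1.deriv, h0 j, hderiv j]
    exact (fderiv ℂ f (z j)).map_smul (a j) (ξ j)
  -- spherical derivative blow-up
  have hρ : ∀ j, ((j : ℕ) : ℝ) / 2 < sphMetric ((f ∘ φ j) 0) (deriv (f ∘ φ j) 0) := by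
    intro j
    set k := kobayashi M (z j) (ξ j) with hkdef
    have hD := hξ j
    have h00 : (f ∘ φ j) 0 = f (z j) := by simp [Function.comp, h0 j]
    rw [h00, hGd j]
    have hsmul : sphMetric (f (z j)) (a j • fderiv ℂ f (z j) (ξ j)) =
        ‖a j‖ * sphMetric (f (z j)) (fderiv ℂ f (z j) (ξ j)) := by
      simp only [sphMetric, norm_smul]
      ring
    rw [hsmul]
    have hapos : 0 < ‖a j‖ := norm_pos_iff.mpr (hane j)
    have h2k : 0 < 2 * k := by linarith [hkpos j]
    have hage : 1 / (2 * k) < ‖a j‖ := by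
      have hlt' := hlt j
      rw [div_lt_iff₀ hapos] at hlt'
      rw [div_lt_iff₀ h2k]
      linarith
    calc ((j : ℕ) : ℝ) / 2 = (1 / (2 * k)) * ((j : ℕ) * k) := by
          have hk' : k ≠ 0 := (hkpos j).ne'
          field_simp
      _ ≤ ‖a j‖ * ((j : ℕ) * k) := by
          apply mul_le_mul_of_nonneg_right hage.le
          exact mul_nonneg (Nat.cast_nonneg j) (hkpos j).le
      _ < ‖a j‖ * sphMetric (f (z j)) (fderiv ℂ f (z j) (ξ j)) :=
          mul_lt_mul_of_pos_left hD hapos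
  -- apply the normal-family hypothesis
  obtain ⟨t, htm, hcase⟩ := h φ hdisk id
  have hKsub : Metric.closedBall (0:ℂ) (1/2) ⊆ unitDisk := halfBall_subset
  have hKcpt : IsCompact (Metric.closedBall (0:ℂ) (1/2)) := isCompact_closedBall _ _
  rcases hcase with ⟨h1, H1⟩ | H2
  · -- convergence branch
    have Hε : ∀ ε > 0, ∀ᶠ j in atTop, ∀ x ∈ Metric.closedBall (0:ℂ) (1/2),
        chordal ((f ∘ φ (t j)) x) (h1 x) < ε := by
      intro ε hε
      have := H1 (Metric.closedBall (0:ℂ) (1/2)) hKsub hKcpt ε hε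
      simpa using this
    obtain ⟨B, hB⟩ := case1_bound (g := fun j => f ∘ φ (t j))
      (fun j => (hGdiff (t j)).continuousOn) Hε
    refine finisher htm hρ (C0 := 4 * B) ?_
    filter_upwards [hB] with j hj
    have hd := deriv_bound_of_bound (hGdiff (t j)) hj
    have := sphMetric_le_two_norm ((f ∘ φ (t j)) 0) (deriv (f ∘ φ (t j)) 0)
    linarith
  · -- divergence branch
    have H2' := H2 (Metric.closedBall (0:ℂ) (1/2)) hKsub hKcpt 1
    refine finisher htm hρ (C0 := 4) ?_
    filter_upwards [H2'] with j hj
    exact marty_case2 (hGdiff (t j)) (by simpa using hj)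

end
end
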